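/- Let g be a complete simple Lie algebra over a field F and let L be a covering algebra of g. Then Der(L) is isomorphic to g; in particular Der(L) is simple and complete. -/

import Mathlib

section Aux
variable {F A B : Type*} [Field F] [LieRing A] [LieAlgebra F A] [LieRing B] [LieAlgebra F B]

lemma stmt15_aux_simple (e : A ≃ₗ⁅F⁆ B) (hs : LieAlgebra.IsSimple F A) :
    LieAlgebra.IsSimple F B := by
  have e0 : e (0 : A) = 0 := e.toLinearEquiv.map_zero
  constructor
  · intro I
    rcases hs.eq_bot_or_eq_top (LieIdeal.comap e.toLieHom I) with h | h
    · left
      rw [LieSubmodule.eq_bot_iff]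
      intro x hx
      have hmem : e.symm x ∈ LieIdeal.comap e.toLieHom I := by
        rw [LieIdeal.mem_comap]
        show e (e.symm x) ∈ I
        rwa [e.apply_symm_apply]
      rw [h, LieSubmodule.mem_bot] at hmem
      have := congrArg e hmem
      rwa [e.apply_symm_apply, e0] at this
    · right
      rw [eq_top_iff]
      intro x _
      have hmem : e.symm x ∈ LieIdeal.comap e.toLieHom I := h ▸ LieSubmodule.mem_top _
      rw [LieIdeal.mem_comap] at hmem
      have : e (e.symm x) ∈ I := hmem
      rwa [e.apply_symm_apply] at this
  · intro hab
    apply hs.non_abelian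
    constructor
    intro a b
    apply e.injective
    show e ⁅a, b⁆ = e 0
    rw [e.map_lie, trivial_lie_zero, e0]

lemma stmt15_aux_center (e : A ≃ₗ⁅F⁆ B) (hc : LieAlgebra.center F A = ⊥) :
    LieAlgebra.center F B = ⊥ := by
  have e0 : e (0 : A) = 0 := e.toLinearEquiv.map_zero
  rw [LieSubmodule.eq_bot_iff]
  intro z hz
  rw [LieModule.mem_maxTrivSubmodule] at hz
  have hmem : e.symm z ∈ LieAlgebra.center F A := by
    rw [LieModule.mem_maxTrivSubmodule]
    intro x
    apply e.injective
    show e ⁅x, e.symm z⁆ = e 0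
    rw [e.map_lie, e.apply_symm_apply, e0]
    exact hz (e x)
  rw [hc, LieSubmodule.mem_bot] at hmem
  have := congrArg e hmem
  rwa [e.apply_symm_apply, e0] at this

lemma stmt15_aux_ad (e : A ≃ₗ⁅F⁆ B)
    (hi : Function.Surjective (LieDerivation.ad F A)) :
    Function.Surjective (LieDerivation.ad F B) := by
  intro D'
  let DA : LieDerivation F A A :=
    { toFun := fun a => e.symm (D' (e a))
      map_add' := by
        intro a b
        show e.symm (D' (e (a + b))) = e.symm (D' (e a)) + e.symm (D' (e b))
        rw [show e (a + b) = e a + e b from e.toLinearEquiv.map_add a b, map_add,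
          show e.symm (D' (e a) + D' (e b)) = e.symm (D' (e a)) + e.symm (D' (e b)) from
            e.symm.toLinearEquiv.map_add _ _]
      map_smul' := by
        intro c a
        show e.symm (D' (e (c • a))) = c • e.symm (D' (e a))
        rw [show e (c • a) = c • e a from e.toLinearEquiv.map_smul c a, map_smul,
          show e.symm (c • D' (e a)) = c • e.symm (D' (e a)) from
            e.symm.toLinearEquiv.map_smul c _]
      leibniz' := by
        intro a b
        show e.symm (D' (e ⁅a, b⁆)) =
          ⁅a, e.symm (D' (e b))⁆ - ⁅b, e.symm (D' (e a))⁆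
        rw [e.map_lie, D'.apply_lie_eq_sub,
          show e.symm (⁅e a, D' (e b)⁆ - ⁅e b, D' (e a)⁆)
            = e.symm ⁅e a, D' (e b)⁆ - e.symm ⁅e b, D' (e a)⁆ from
            e.symm.toLinearEquiv.map_sub _ _]
        congr 1
        · have h := e.symm.map_lie (e a) (D' (e b))
          rwa [e.symm_apply_apply] at h
        · have h := e.symm.map_lie (e b) (D' (e a))
          rwa [e.symm_apply_apply] at h }
  obtain ⟨a, ha⟩ := hi DA
  refine ⟨e a, ?_⟩
  ext b
  have h1 : ⁅a, e.symm b⁆ = e.symm (D' b) := by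
    have h := congrArg (fun D => (D : LieDerivation F A A) (e.symm b)) ha
    simp only [LieDerivation.ad_apply_apply] at h
    have h2 : DA (e.symm b) = e.symm (D' b) := by
      show e.symm (D' (e (e.symm b))) = e.symm (D' b)
      rw [e.apply_symm_apply]
    rw [h2] at h
    exact h
  have h3 := congrArg e h1
  rw [e.map_lie, e.apply_symm_apply, e.apply_symm_apply] at h3
  rw [LieDerivation.ad_apply_apply]
  exact h3

end Aux


section Main
variable {F g L : Type*} [Field F] [LieRing g] [LieAlgebra F g] [LieRing L] [LieAlgebra F L]

lemma stmt15_aux_equiv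
    (hcenterg : LieAlgebra.center F g = ⊥)
    (hinnerg : Function.Surjective (LieDerivation.ad F g))
    (p : L →ₗ⁅F⁆ g) (hpsurj : Function.Surjective p)
    (hpcent : p.ker ≤ LieAlgebra.center F L)
    (hLperf : ⁅(⊤ : LieIdeal F L), (⊤ : LieIdeal F L)⁆ = ⊤) :
    Nonempty (g ≃ₗ⁅F⁆ LieDerivation F L L) := by
  classical
  set s : g → L := Function.surjInv hpsurj with hs_def
  have hs : ∀ y, p (s y) = y := fun y => Function.surjInv_eq hpsurj y
  -- elements of ker p are central
  have hzc : ∀ z : L, p z = 0 → ∀ x : L, ⁅x, z⁆ = 0 := by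
    intro z hz x
    have hmem : z ∈ LieAlgebra.center F L := hpcent (LieHom.mem_ker.mpr hz)
    exact (LieModule.mem_maxTrivSubmodule F L L z).mp hmem x
  have hzc' : ∀ z : L, p z = 0 → ∀ x : L, ⁅z, x⁆ = 0 := by
    intro z hz x
    rw [← lie_skew, hzc z hz x, neg_zero]
  -- central elements of L die under p
  have hcg : ∀ z : L, (∀ x : L, ⁅x, z⁆ = 0) → p z = 0 := by
    intro z hz
    have hmem : p z ∈ LieAlgebra.center F g := by
      rw [LieModule.mem_maxTrivSubmodule]
      intro y
      obtain ⟨x, rfl⟩ := hpsurj y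
      rw [← p.map_lie, hz x, map_zero p]
    rwa [hcenterg, LieSubmodule.mem_bot] at hmem
  -- ad only depends on the image under p
  have hadeq : ∀ x x' : L, p x = p x' →
      LieDerivation.ad F L x = LieDerivation.ad F L x' := by
    intro x x' h
    ext z
    rw [LieDerivation.ad_apply_apply, LieDerivation.ad_apply_apply]
    have h0 : p (x - x') = 0 := by rw [map_sub p, h, sub_self]
    have h2 : ⁅x - x', z⁆ = 0 := hzc' _ h0 z
    rw [sub_lie] at h2
    exact sub_eq_zero.mp h2
  -- the candidate map
  let Ψ : g →ₗ⁅F⁆ LieDerivation F L L :=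
    { toFun := fun y => LieDerivation.ad F L (s y)
      map_add' := by
        intro y y'
        show LieDerivation.ad F L (s (y + y'))
          = LieDerivation.ad F L (s y) + LieDerivation.ad F L (s y')
        rw [hadeq (s (y + y')) (s y + s y') (by rw [map_add p, hs, hs, hs]), map_add (LieDerivation.ad F L)]
      map_smul' := by
        intro c y
        show LieDerivation.ad F L (s (c • y)) = c • LieDerivation.ad F L (s y)
        rw [hadeq (s (c • y)) (c • s y) (by rw [map_smul p, hs, hs]), map_smul (LieDerivation.ad F L)]
      map_lie' := by
        intro y y'
        show LieDerivation.ad F L (s ⁅y, y'⁆)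
          = ⁅LieDerivation.ad F L (s y), LieDerivation.ad F L (s y')⁆
        rw [hadeq (s ⁅y, y'⁆) ⁅s y, s y'⁆ (by rw [p.map_lie, hs, hs, hs]),
          (LieDerivation.ad F L).map_lie] }
  have hΨ : ∀ y, Ψ y = LieDerivation.ad F L (s y) := fun _ => rfl
  -- injectivity
  have hinj : Function.Injective Ψ := by
    intro y y' h
    rw [hΨ, hΨ] at h
    have hd : p (s y - s y') = 0 := by
      apply hcg
      intro x
      have hx := congrArg (fun D : LieDerivation F L L => D x) h
      simp only [LieDerivation.ad_apply_apply] at hx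
      have : ⁅x, s y⁆ = ⁅x, s y'⁆ := by
        rw [← lie_skew, hx, lie_skew]
      rw [lie_sub, this, sub_self]
    rw [map_sub p, hs, hs, sub_eq_zero] at hd
    exact hd
  -- surjectivity
  have hsurj : Function.Surjective Ψ := by
    intro D
    -- D preserves ker p
    have hDker : ∀ z : L, p z = 0 → p (D z) = 0 := by
      intro z hz
      apply hcg
      intro x
      have h1 : D ⁅z, x⁆ = 0 := by rw [hzc' z hz x, map_zero]
      rw [D.apply_lie_eq_sub] at h1
      have h2 : ⁅z, D x⁆ = 0 := hzc' z hz (D x)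
      rw [h2, zero_sub, neg_eq_zero] at h1
      exact h1
    have hDeq : ∀ u v : L, p u = p v → p (D u) = p (D v) := by
      intro u v huv
      have h0 : p (D (u - v)) = 0 := hDker _ (by rw [map_sub p, huv, sub_self])
      rw [map_sub, map_sub p, sub_eq_zero] at h0
      exact h0
    -- the induced derivation on g
    let fD : LieDerivation F g g :=
      { toFun := fun y => p (D (s y))
        map_add' := by
          intro y y'
          show p (D (s (y + y'))) = p (D (s y)) + p (D (s y'))
          rw [hDeq (s (y + y')) (s y + s y') (by rw [map_add p, hs, hs, hs]),
            map_add, map_add p]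
        map_smul' := by
          intro c y
          show p (D (s (c • y))) = c • p (D (s y))
          rw [hDeq (s (c • y)) (c • s y) (by rw [map_smul p, hs, hs]), map_smul, map_smul p]
        leibniz' := by
          intro a b
          show p (D (s ⁅a, b⁆)) = ⁅a, p (D (s b))⁆ - ⁅b, p (D (s a))⁆
          rw [hDeq (s ⁅a, b⁆) ⁅s a, s b⁆ (by rw [p.map_lie, hs, hs, hs]),
            D.apply_lie_eq_sub, map_sub p, p.map_lie, p.map_lie, hs, hs] }
    obtain ⟨y0, hy0⟩ := hinnerg fD
    -- the difference derivation is p-trivial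
    have hfD : ∀ x : L, p (D x) = ⁅y0, p x⁆ := by
      intro x
      have h1 : p (D x) = fD (p x) := (hDeq (s (p x)) x (hs _)).symm
      have h2 : fD (p x) = ⁅y0, p x⁆ := by
        rw [← hy0, LieDerivation.ad_apply_apply]
      rw [h1, h2]
    set E : LieDerivation F L L := D - LieDerivation.ad F L (s y0) with hE_def
    have hEapp : ∀ x : L, E x = D x - ⁅s y0, x⁆ := by
      intro x
      rw [hE_def, LieDerivation.sub_apply, LieDerivation.ad_apply_apply]
    have hEker : ∀ x : L, p (E x) = 0 := by
      intro x
      rw [hEapp, map_sub p, p.map_lie, hs, hfD, sub_self]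
    -- E vanishes since L is perfect
    have hEzero : ∀ x : L, E x = 0 := by
      let K : LieIdeal F L :=
        { LinearMap.ker (E : L →ₗ[F] L) with
          lie_mem := by
            intro x m hm
            have hm' : E m = 0 := hm
            show E ⁅x, m⁆ = 0
            rw [E.apply_lie_eq_sub, hm', lie_zero, hzc (E x) (hEker x) m, sub_zero] }
      have hK : (⊤ : LieIdeal F L) ≤ K := by
        rw [← hLperf, LieSubmodule.lie_le_iff]
        intro x _ m _
        show E ⁅x, m⁆ = 0
        rw [E.apply_lie_eq_sub, hzc (E m) (hEker m) x, hzc (E x) (hEker x) m, sub_zero]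
      intro x
      exact hK (LieSubmodule.mem_top x)
    refine ⟨y0, ?_⟩
    rw [hΨ]
    ext x
    have := hEzero x
    rw [hEapp, sub_eq_zero] at this
    rw [LieDerivation.ad_apply_apply]
    exact this.symm
  exact ⟨LieEquiv.ofBijective Ψ ⟨hinj, hsurj⟩⟩

end Main

/-- Let `g` be a complete simple Lie algebra over a field `F` and let `L` be a covering
algebra of `g`.  Then `Der(L) ≅ g`; in particular `Der(L)` is simple and complete. -/
theorem stmt15 (F g L : Type*) [Field F] [LieRing g] [LieAlgebra F g]
    [LieRing L] [LieAlgebra F L]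
    (hsimple : LieAlgebra.IsSimple F g)
    -- `g` is complete: trivial center and every derivation is inner
    (hcenterg : LieAlgebra.center F g = ⊥)
    (hinnerg : Function.Surjective (LieDerivation.ad F g))
    -- `L` is a covering algebra of `g` via `p`
    (p : L →ₗ⁅F⁆ g) (hpsurj : Function.Surjective p)
    (hpcent : p.ker ≤ LieAlgebra.center F L)
    (hLperf : ⁅(⊤ : LieIdeal F L), (⊤ : LieIdeal F L)⁆ = ⊤) :
    Nonempty (LieDerivation F L L ≃ₗ⁅F⁆ g) ∧
      LieAlgebra.IsSimple F (LieDerivation F L L) ∧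
      LieAlgebra.center F (LieDerivation F L L) = ⊥ ∧
      Function.Surjective (LieDerivation.ad F (LieDerivation F L L)) := by
  obtain ⟨e⟩ := stmt15_aux_equiv hcenterg hinnerg p hpsurj hpcent hLperf
  exact ⟨⟨e.symm⟩, stmt15_aux_simple e hsimple, stmt15_aux_center e hcenterg,
    stmt15_aux_ad e hinnerg⟩
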